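/- Let n ≥ 2 and let f(x) = x^n + a_{n−1}x^{n−1} + a_{n−2}x^{n−2} + ⋯ + a_1 x + a_0 ∈ ℤ[x] with a_0 ≠ 0. If |a_{n−1}| > 1 + |a_{n−2}| + |a_{n−3}| + ⋯ + |a_0|, then f is irreducible over ℚ. -/

import Mathlib

open Polynomial

private lemma multiset_prod_lt_one (s : Multiset ℝ) (h : ∀ x ∈ s, 0 ≤ x ∧ x < 1)
    (hs : s ≠ 0) : s.prod < 1 := by
  induction s using Multiset.induction with
  | empty => exact absurd rfl hs
  | cons a t ih =>
    rcases eq_or_ne t 0 with rfl | ht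
    · simpa using (h a (by simp)).2
    · have hprod := ih (fun x hx => h x (Multiset.mem_cons_of_mem hx)) ht
      have hnn : (0:ℝ) ≤ t.prod :=
        Multiset.prod_nonneg fun x hx => (h x (Multiset.mem_cons_of_mem hx)).1
      have ha := h a (Multiset.mem_cons_self a t)
      rw [Multiset.prod_cons]
      nlinarith [ha.1, ha.2]

noncomputable def Complex.abs : AbsoluteValue ℂ ℝ := NormedField.toAbsoluteValue ℂ

@[simp] lemma Complex.abs_apply (z : ℂ) : Complex.abs z = ‖z‖ := rfl

private lemma exists_big_root (p : Polynomial ℂ) (hm : p.Monic) (hd : 1 ≤ p.natDegree)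
    (h0 : 1 ≤ Complex.abs (p.eval 0)) : ∃ z : ℂ, p.eval z = 0 ∧ 1 ≤ Complex.abs z := by
  by_contra hcon
  push_neg at hcon
  have hsplit : p = (p.roots.map fun a => X - C a).prod :=
    (IsAlgClosed.splits p).eq_prod_roots_of_monic hm
  have hcard : p.roots.card = p.natDegree := by
    rw [← Polynomial.splits_iff_card_roots]
    exact IsAlgClosed.splits p
  have hroots : p.roots ≠ 0 := by
    intro h
    rw [h] at hcard
    simp at hcard
    omega
  have heval : p.eval 0 = ((p.roots.map fun a => -a)).prod := by
    conv_lhs => rw [hsplit]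
    rw [Polynomial.eval_multiset_prod, Multiset.map_map]
    congr 1
    apply Multiset.map_congr rfl
    intro a _
    simp
  have habs : Complex.abs (p.eval 0) = ((p.roots.map fun a => Complex.abs a)).prod := by
    rw [heval, map_multiset_prod Complex.abs, Multiset.map_map]
    congr 1
    apply Multiset.map_congr rfl
    intro a _
    simp
  have hlt : ((p.roots.map fun a => Complex.abs a)).prod < 1 := by
    apply multiset_prod_lt_one
    · intro x hx
      obtain ⟨a, ha, rfl⟩ := Multiset.mem_map.mp hx
      exact ⟨Complex.abs.nonneg a, hcon a (Polynomial.isRoot_of_mem_roots ha)⟩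
    · simpa using hroots
  rw [habs] at h0
  linarith

private lemma tele_coeff (q : Polynomial ℂ) (a : ℂ) (l : ℕ) :
    ∑ k ∈ Finset.range (l + 1), ((X - C a) * q).coeff k * a ^ k
      = -(q.coeff l * a ^ (l + 1)) := by
  induction l with
  | zero =>
    simp [Polynomial.mul_coeff_zero, Polynomial.coeff_sub]
    ring
  | succ l ih =>
    rw [Finset.sum_range_succ, ih]
    have hc : ((X - C a) * q).coeff (l + 1) = q.coeff l - a * q.coeff (l + 1) := by
      rw [sub_mul, Polynomial.coeff_sub, Polynomial.coeff_X_mul, Polynomial.coeff_C_mul]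
    rw [hc]
    ring

set_option maxHeartbeats 1000000 in
private lemma perron_key (n : ℕ) (hn : 2 ≤ n) (f g h : Polynomial ℤ) (hmonic : f.Monic)
    (hdeg : f.natDegree = n) (h0 : f.coeff 0 ≠ 0)
    (hdom : 1 + ∑ i ∈ Finset.range (n - 1), |f.coeff i| < |f.coeff (n - 1)|)
    (hgh : f = g * h) (hgm : g.Monic) (hhm : h.Monic)
    (hg1 : 1 ≤ g.natDegree) (hh1 : 1 ≤ h.natDegree) : False := by
  set m := n - 1 with hm
  have hmn : m + 1 = n := by omega
  have hm1 : 1 ≤ m := by omega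
  set Sz : ℤ := ∑ i ∈ Finset.range m, |f.coeff i| with hSz
  set S : ℝ := (Sz : ℝ) with hSr
  set Az : ℤ := |f.coeff m| with hAz
  set A : ℝ := (Az : ℝ) with hAr
  have hS0 : 0 ≤ S := by
    rw [hSr]
    have : (0:ℤ) ≤ Sz := Finset.sum_nonneg fun i _ => abs_nonneg _
    exact_mod_cast this
  have hAS : S + 2 ≤ A := by
    rw [hSr, hAr]
    have : Sz + 2 ≤ Az := by omega
    exact_mod_cast this
  set F : Polynomial ℂ := f.map (Int.castRingHom ℂ) with hF
  set G : Polynomial ℂ := g.map (Int.castRingHom ℂ) with hG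
  set H : Polynomial ℂ := h.map (Int.castRingHom ℂ) with hH
  have hFm : F.Monic := hmonic.map _
  have hGm : G.Monic := hgm.map _
  have hHm : H.Monic := hhm.map _
  have hFdeg : F.natDegree = n := by rw [hF, hmonic.natDegree_map, hdeg]
  have hGdeg : G.natDegree = g.natDegree := hgm.natDegree_map _
  have hHdeg : H.natDegree = h.natDegree := hhm.natDegree_map _
  have hFGH : F = G * H := by rw [hF, hG, hH, hgh, Polynomial.map_mul]
  have hcoeffF : ∀ k, Complex.abs (F.coeff k) = ((|f.coeff k| : ℤ) : ℝ) := by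
    intro k
    rw [hF, Polynomial.coeff_map]
    simp
  -- every root of F of modulus ≥ 1 has modulus ≥ S/2 + 2
  have hroot : ∀ z : ℂ, F.eval z = 0 → 1 ≤ Complex.abs z →
      S / 2 + 2 ≤ Complex.abs z := by
    intro z hz h1
    set r : ℝ := Complex.abs z with hr
    have hr0 : (0:ℝ) < r := lt_of_lt_of_le one_pos h1
    have hsum : ∑ i ∈ Finset.range (n + 1), F.coeff i * z ^ i = 0 := by
      rw [← Polynomial.eval_eq_sum_range' (by omega : F.natDegree < n + 1)]
      exact hz
    have hlead : F.coeff (m + 1) = 1 := by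
      have := hFm.coeff_natDegree
      rwa [hFdeg, ← hmn] at this
    have hsplit : z ^ m * (z + F.coeff m)
        = -∑ i ∈ Finset.range m, F.coeff i * z ^ i := by
      have h1' : n + 1 = m + 1 + 1 := by omega
      rw [h1', Finset.sum_range_succ, Finset.sum_range_succ, hlead, one_mul] at hsum
      linear_combination hsum
    -- abs estimate : r^m * |z + c_m| * r ≤ S * r^m
    have hrhs : Complex.abs (∑ i ∈ Finset.range m, F.coeff i * z ^ i) * r ≤ S * r ^ m := by
      calc Complex.abs (∑ i ∈ Finset.range m, F.coeff i * z ^ i) * r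
          ≤ (∑ i ∈ Finset.range m, Complex.abs (F.coeff i) * r ^ i) * r := by
            apply mul_le_mul_of_nonneg_right _ (le_of_lt hr0)
            refine le_trans (AbsoluteValue.sum_le Complex.abs _ _) ?_
            apply le_of_eq
            apply Finset.sum_congr rfl
            intro i _
            rw [map_mul, map_pow]
        _ = ∑ i ∈ Finset.range m, Complex.abs (F.coeff i) * r ^ (i + 1) := by
            rw [Finset.sum_mul]
            apply Finset.sum_congr rfl
            intro i _
            rw [pow_succ]
            ring
        _ ≤ ∑ i ∈ Finset.range m, Complex.abs (F.coeff i) * r ^ m := by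
            apply Finset.sum_le_sum
            intro i hi
            have : i + 1 ≤ m := Finset.mem_range.mp hi
            exact mul_le_mul_of_nonneg_left (pow_le_pow_right₀ h1 this)
              (Complex.abs.nonneg _)
        _ = S * r ^ m := by
            rw [← Finset.sum_mul]
            congr 1
            rw [hSr, hSz]
            push_cast
            apply Finset.sum_congr rfl
            intro i _
            rw [hcoeffF i]
            push_cast
            ring
    have hlhs : r ^ m * (A - r)
        ≤ Complex.abs (∑ i ∈ Finset.range m, F.coeff i * z ^ i) := by
      have habs1 : A - r ≤ Complex.abs (z + F.coeff m) := by
        have h2 : Complex.abs (F.coeff m) ≤ Complex.abs (z + F.coeff m) + Complex.abs z := by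
          have e : F.coeff m = (z + F.coeff m) + (-z) := by ring
          calc Complex.abs (F.coeff m) = Complex.abs ((z + F.coeff m) + (-z)) := by rw [← e]
            _ ≤ Complex.abs (z + F.coeff m) + Complex.abs (-z) := Complex.abs.add_le _ _
            _ = Complex.abs (z + F.coeff m) + Complex.abs z := by rw [Complex.abs.map_neg]
        rw [hcoeffF m] at h2
        rw [hAr, hAz]
        linarith
      calc r ^ m * (A - r)
          ≤ r ^ m * Complex.abs (z + F.coeff m) :=
            mul_le_mul_of_nonneg_left habs1 (pow_nonneg (le_of_lt hr0) m)
        _ = Complex.abs (z ^ m * (z + F.coeff m)) := by rw [map_mul, map_pow]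
        _ = Complex.abs (∑ i ∈ Finset.range m, F.coeff i * z ^ i) := by
            rw [hsplit, Complex.abs.map_neg]
    -- combine: (A - r) * r ≤ S
    have hkey : (A - r) * r ≤ S := by
      have hmul : r ^ m * (A - r) * r ≤ S * r ^ m := by
        calc r ^ m * (A - r) * r
            ≤ Complex.abs (∑ i ∈ Finset.range m, F.coeff i * z ^ i) * r :=
              mul_le_mul_of_nonneg_right hlhs (le_of_lt hr0)
          _ ≤ S * r ^ m := hrhs
      have hrm : (0:ℝ) < r ^ m := pow_pos hr0 m
      nlinarith [hmul, hrm]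
    have hA : S + 2 ≤ A := hAS
    have hstep1 : 2 ≤ r := by nlinarith [hkey, hA, hS0, h1]
    nlinarith [hkey, hA, hS0, hstep1]
  -- find big roots of G and H
  have hg0 : g.coeff 0 ≠ 0 := by
    intro e
    apply h0
    rw [hgh, Polynomial.mul_coeff_zero, e, zero_mul]
  have hh0 : h.coeff 0 ≠ 0 := by
    intro e
    apply h0
    rw [hgh, Polynomial.mul_coeff_zero, e, mul_zero]
  have hGeval : 1 ≤ Complex.abs (G.eval 0) := by
    rw [← Polynomial.coeff_zero_eq_eval_zero, hG, Polynomial.coeff_map]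
    have : 1 ≤ |g.coeff 0| := Int.one_le_abs hg0
    have h2 : Complex.abs ((Int.castRingHom ℂ) (g.coeff 0)) = ((|g.coeff 0| : ℤ) : ℝ) := by
      simp
    rw [h2]
    exact_mod_cast this
  have hHeval : 1 ≤ Complex.abs (H.eval 0) := by
    rw [← Polynomial.coeff_zero_eq_eval_zero, hH, Polynomial.coeff_map]
    have : 1 ≤ |h.coeff 0| := Int.one_le_abs hh0
    have h2 : Complex.abs ((Int.castRingHom ℂ) (h.coeff 0)) = ((|h.coeff 0| : ℤ) : ℝ) := by
      simp
    rw [h2]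
    exact_mod_cast this
  obtain ⟨α, hGα, hα1⟩ := exists_big_root G hGm (hGdeg ▸ hg1) hGeval
  obtain ⟨β, hHβ, hβ1⟩ := exists_big_root H hHm (hHdeg ▸ hh1) hHeval
  have hFα : F.eval α = 0 := by rw [hFGH]; simp [hGα]
  have hFβ : F.eval β = 0 := by rw [hFGH]; simp [hHβ]
  set t : ℝ := Complex.abs α with ht
  set s : ℝ := Complex.abs β with hs
  have htS : S / 2 + 2 ≤ t := hroot α hFα hα1
  have hsS : S / 2 + 2 ≤ s := hroot β hFβ hβ1
  have ht0 : (0:ℝ) < t := by linarith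
  have hs0 : (0:ℝ) < s := by linarith
  -- divisibility and factorization
  have hdvd : (X - C α) * (X - C β) ∣ F := by
    rw [hFGH]
    exact mul_dvd_mul ((Polynomial.dvd_iff_isRoot).2 hGα) ((Polynomial.dvd_iff_isRoot).2 hHβ)
  obtain ⟨W, hW⟩ := hdvd
  set G1 : Polynomial ℂ := (X - C β) * W with hG1
  have hFG1 : F = (X - C α) * G1 := by rw [hW, hG1]; ring
  have hG1β : G1.eval β = 0 := by rw [hG1]; simp
  have hFne : F ≠ 0 := hFm.ne_zero
  have hG1ne : G1 ≠ 0 := by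
    intro e
    apply hFne
    rw [hFG1, e, mul_zero]
  have hG1m : G1.Monic := (monic_X_sub_C α).of_mul_monic_left (hFG1 ▸ hFm)
  have hG1deg : G1.natDegree = m := by
    have := Polynomial.natDegree_mul (Polynomial.X_sub_C_ne_zero α) hG1ne
    rw [← hFG1, hFdeg, Polynomial.natDegree_X_sub_C] at this
    omega
  -- coefficient bound : |G1.coeff l| * t ≤ S for l < m
  have hb : ∀ l < m, Complex.abs (G1.coeff l) * t ≤ S := by
    intro l hl
    have htl : (0:ℝ) < t ^ l := pow_pos ht0 l
    have ht1 : (1:ℝ) ≤ t := by linarith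
    have htele := tele_coeff G1 α l
    rw [← hFG1] at htele
    have hbound : Complex.abs (G1.coeff l) * t ^ (l + 1) ≤ S * t ^ l := by
      calc Complex.abs (G1.coeff l) * t ^ (l + 1)
          = Complex.abs (-(G1.coeff l * α ^ (l + 1))) := by
            rw [Complex.abs.map_neg, map_mul, map_pow]
        _ = Complex.abs (∑ k ∈ Finset.range (l + 1), F.coeff k * α ^ k) := by
            rw [htele]
        _ ≤ ∑ k ∈ Finset.range (l + 1), Complex.abs (F.coeff k) * t ^ k := by
            refine le_trans (AbsoluteValue.sum_le Complex.abs _ _) ?_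
            apply le_of_eq
            apply Finset.sum_congr rfl
            intro k _
            rw [map_mul, map_pow]
        _ ≤ ∑ k ∈ Finset.range (l + 1), Complex.abs (F.coeff k) * t ^ l := by
            apply Finset.sum_le_sum
            intro k hk
            have : k ≤ l := by
              have := Finset.mem_range.mp hk; omega
            exact mul_le_mul_of_nonneg_left (pow_le_pow_right₀ ht1 this)
              (Complex.abs.nonneg _)
        _ = (∑ k ∈ Finset.range (l + 1), ((|f.coeff k| : ℤ) : ℝ)) * t ^ l := by
            rw [← Finset.sum_mul]
            congr 1
            exact Finset.sum_congr rfl fun k _ => hcoeffF k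
        _ ≤ S * t ^ l := by
            apply mul_le_mul_of_nonneg_right _ (le_of_lt htl)
            rw [hSr, hSz]
            have hsub : Finset.range (l + 1) ⊆ Finset.range m :=
              Finset.range_subset_range.mpr (by omega)
            have := Finset.sum_le_sum_of_subset_of_nonneg hsub
              (fun i _ _ => abs_nonneg (f.coeff i))
            push_cast
            exact_mod_cast this
    have : Complex.abs (G1.coeff l) * t * t ^ l ≤ S * t ^ l := by
      calc Complex.abs (G1.coeff l) * t * t ^ l
          = Complex.abs (G1.coeff l) * t ^ (l + 1) := by rw [pow_succ]; ring
        _ ≤ S * t ^ l := hbound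
    exact le_of_mul_le_mul_right this htl
  -- final estimate: t * (s - 1) ≤ S
  have hG1sum : ∑ l ∈ Finset.range (m + 1), G1.coeff l * β ^ l = 0 := by
    rw [← Polynomial.eval_eq_sum_range' (by omega : G1.natDegree < m + 1)]
    exact hG1β
  have hG1lead : G1.coeff m = 1 := by
    have := hG1m.coeff_natDegree
    rwa [hG1deg] at this
  have hβm : β ^ m = -∑ l ∈ Finset.range m, G1.coeff l * β ^ l := by
    rw [Finset.sum_range_succ, hG1lead, one_mul] at hG1sum
    linear_combination hG1sum
  have hsm : s ^ m * t ≤ S * ∑ l ∈ Finset.range m, s ^ l := by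
    calc s ^ m * t = Complex.abs (β ^ m) * t := by rw [map_pow]
      _ = Complex.abs (∑ l ∈ Finset.range m, G1.coeff l * β ^ l) * t := by
          rw [hβm, Complex.abs.map_neg]
      _ ≤ (∑ l ∈ Finset.range m, Complex.abs (G1.coeff l) * s ^ l) * t := by
          apply mul_le_mul_of_nonneg_right _ (le_of_lt ht0)
          refine le_trans (AbsoluteValue.sum_le Complex.abs _ _) ?_
          apply le_of_eq
          apply Finset.sum_congr rfl
          intro l _
          rw [map_mul, map_pow]
      _ = ∑ l ∈ Finset.range m, Complex.abs (G1.coeff l) * t * s ^ l := by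
          rw [Finset.sum_mul]
          apply Finset.sum_congr rfl
          intro l _
          ring
      _ ≤ ∑ l ∈ Finset.range m, S * s ^ l := by
          apply Finset.sum_le_sum
          intro l hl
          exact mul_le_mul_of_nonneg_right (hb l (Finset.mem_range.mp hl))
            (pow_nonneg (le_of_lt hs0) l)
      _ = S * ∑ l ∈ Finset.range m, s ^ l := by rw [Finset.mul_sum]
  have hgeom : (∑ l ∈ Finset.range m, s ^ l) * (s - 1) = s ^ m - 1 := geom_sum_mul s m
  have hsm0 : (0:ℝ) < s ^ m := pow_pos hs0 m
  have hsum0 : (0:ℝ) ≤ ∑ l ∈ Finset.range m, s ^ l :=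
    Finset.sum_nonneg fun l _ => pow_nonneg (le_of_lt hs0) l
  have hfinal : t * (s - 1) ≤ S := by
    have hs1 : (0:ℝ) < s - 1 := by linarith
    have h1 : s ^ m * t * (s - 1) ≤ S * (s ^ m - 1) := by
      calc s ^ m * t * (s - 1) ≤ S * (∑ l ∈ Finset.range m, s ^ l) * (s - 1) := by
            apply mul_le_mul_of_nonneg_right hsm (le_of_lt hs1)
        _ = S * (s ^ m - 1) := by rw [mul_assoc, hgeom]
    nlinarith [h1, hsm0, hS0]
  nlinarith [hfinal, htS, hsS, hS0]

theorem stmt_13 (n : ℕ) (hn : 2 ≤ n) (f : Polynomial ℤ) (hmonic : f.Monic)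
    (hdeg : f.natDegree = n) (h0 : f.coeff 0 ≠ 0)
    (hdom : 1 + ∑ i ∈ Finset.range (n - 1), |f.coeff i| < |f.coeff (n - 1)|) :
    Irreducible (f.map (algebraMap ℤ ℚ)) := by
  rw [← hmonic.irreducible_iff_irreducible_map_fraction_map]
  constructor
  · intro hu
    have := Polynomial.natDegree_eq_zero_of_isUnit hu
    omega
  · intro g h hgh
    by_contra hcon
    push_neg at hcon
    obtain ⟨hgu, hhu⟩ := hcon
    have hgne : g ≠ 0 := by
      intro e
      apply hmonic.ne_zero
      rw [hgh, e, zero_mul]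
    have hhne : h ≠ 0 := by
      intro e
      apply hmonic.ne_zero
      rw [hgh, e, mul_zero]
    have hlc : g.leadingCoeff * h.leadingCoeff = 1 := by
      rw [← Polynomial.leadingCoeff_mul, ← hgh]
      exact hmonic
    have hgdeg : 1 ≤ g.natDegree := by
      by_contra hd
      push_neg at hd
      interval_cases hdg : g.natDegree
      · have hgC : g = C (g.coeff 0) := Polynomial.eq_C_of_natDegree_eq_zero hdg
        apply hgu
        rw [hgC]
        apply Polynomial.isUnit_C.mpr
        have : g.leadingCoeff = g.coeff 0 := by
          rw [Polynomial.leadingCoeff, hdg]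
        rw [← this]
        exact IsUnit.of_mul_eq_one _ hlc
    have hhdeg : 1 ≤ h.natDegree := by
      by_contra hd
      push_neg at hd
      interval_cases hdh : h.natDegree
      · have hhC : h = C (h.coeff 0) := Polynomial.eq_C_of_natDegree_eq_zero hdh
        apply hhu
        rw [hhC]
        apply Polynomial.isUnit_C.mpr
        have : h.leadingCoeff = h.coeff 0 := by
          rw [Polynomial.leadingCoeff, hdh]
        rw [← this]
        exact IsUnit.of_mul_eq_one _ (by rw [mul_comm] at hlc; exact hlc)
    rcases Int.mul_eq_one_iff_eq_one_or_neg_one.mp hlc with ⟨hg1, hh1⟩ | ⟨hg1, hh1⟩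
    · exact perron_key n hn f g h hmonic hdeg h0 hdom hgh hg1 hh1 hgdeg hhdeg
    · have hgm : (-g).Monic := by
        rw [Polynomial.Monic, Polynomial.leadingCoeff_neg, hg1]
        ring
      have hhm : (-h).Monic := by
        rw [Polynomial.Monic, Polynomial.leadingCoeff_neg, hh1]
        ring
      have hgh' : f = (-g) * (-h) := by rw [neg_mul_neg]; exact hgh
      exact perron_key n hn f (-g) (-h) hmonic hdeg h0 hdom hgh' hgm hhm
        (by rwa [Polynomial.natDegree_neg]) (by rwa [Polynomial.natDegree_neg])
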